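/- arXiv:2411.04500 — 3 statements merged into one kernel-verified Lean document; each statement's English description precedes it below -/
import Mathlib

section
/- Let α > 0 and s > α + 1 be real numbers. Then there exists a constant C > 0, depending only on α and s, such that for every δ ∈ (0,1] one has ∑_{k ∈ ℤ² ∖ {0}} ‖k‖^{2α} / (1 + δ·‖k‖^{2s}) ≤ C · δ^{-(α+1)/s}; in particular this series converges for every δ ∈ (0,1]. -/
open scoped ENNReal

/-- Euclidean norm of a lattice point `k ∈ ℤ²` viewed inside `ℝ²`. -/
noncomputable def latticeNorm (k : ℤ × ℤ) : ℝ :=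
  Real.sqrt ((k.1 : ℝ) ^ 2 + (k.2 : ℝ) ^ 2)

noncomputable def vA (α s : ℝ) (i : ℕ) : ℝ :=
  if i = 0 then (2:ℝ) ^ (2*α) else (i:ℝ) ^ (2*α - 2*s)

lemma vA_nonneg (α s : ℝ) (i : ℕ) : 0 ≤ vA α s i := by
  unfold vA; split <;> positivity

lemma summable_vA (α s : ℝ) (hs : α + 1 < s) :
    Summable (fun i : ℕ => ((i:ℝ) + 1) * vA α s i) := by
  rw [← summable_nat_add_iff 1]
  have h1 : Summable (fun n : ℕ => ((n:ℝ)+1) ^ (2*α - 2*s + 1)) := by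
    have := (summable_nat_add_iff (f := fun n : ℕ => (n:ℝ) ^ (2*α-2*s+1)) 1).mpr
      (Real.summable_nat_rpow.mpr (by linarith))
    simpa using this
  apply Summable.of_nonneg_of_le (fun n => mul_nonneg (by positivity) (vA_nonneg _ _ _)) _ (h1.mul_left 2)
  intro n
  have hpos : (0:ℝ) < (n:ℝ) + 1 := by positivity
  have hvA : vA α s (n+1) = ((n:ℝ)+1) ^ (2*α - 2*s) := by
    simp [vA]
  rw [hvA]
  push_cast
  rw [Real.rpow_add_one (ne_of_gt hpos)]
  have hr : (0:ℝ) ≤ ((n:ℝ)+1) ^ (2*α - 2*s) := by positivity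
  nlinarith [hr]

lemma latticeNorm_lower (k : ℤ × ℤ) :
    ((max k.1.natAbs k.2.natAbs : ℕ) : ℝ) ≤ latticeNorm k := by
  have h1 : ((k.1.natAbs : ℕ):ℝ) = |(k.1:ℝ)| := by
    rw [Nat.cast_natAbs, Int.cast_abs]
  have h2 : ((k.2.natAbs : ℕ):ℝ) = |(k.2:ℝ)| := by
    rw [Nat.cast_natAbs, Int.cast_abs]
  rw [Nat.cast_max, h1, h2]
  rcases max_choice |(k.1:ℝ)| |(k.2:ℝ)| with h | h <;> rw [h] <;>
    [ (rw [← Real.sqrt_sq (abs_nonneg (k.1:ℝ))]);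
      (rw [← Real.sqrt_sq (abs_nonneg (k.2:ℝ))])] <;>
    apply Real.sqrt_le_sqrt <;> rw [sq_abs] <;> nlinarith [sq_nonneg ((k.1:ℝ)), sq_nonneg ((k.2:ℝ))]

lemma latticeNorm_upper (k : ℤ × ℤ) :
    latticeNorm k ≤ Real.sqrt 2 * ((max k.1.natAbs k.2.natAbs : ℕ) : ℝ) := by
  have h1 : ((k.1.natAbs : ℕ):ℝ) = |(k.1:ℝ)| := by rw [Nat.cast_natAbs, Int.cast_abs]
  have h2 : ((k.2.natAbs : ℕ):ℝ) = |(k.2:ℝ)| := by rw [Nat.cast_natAbs, Int.cast_abs]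
  rw [Nat.cast_max, h1, h2]
  set m := max |(k.1:ℝ)| |(k.2:ℝ)| with hm
  have hm0 : 0 ≤ m := le_trans (abs_nonneg _) (le_max_left _ _)
  have key : latticeNorm k ≤ Real.sqrt (2 * m^2) := by
    apply Real.sqrt_le_sqrt
    have ha : (k.1:ℝ)^2 ≤ m^2 := by
      have := le_max_left |(k.1:ℝ)| |(k.2:ℝ)|
      nlinarith [abs_nonneg (k.1:ℝ), sq_abs (k.1:ℝ)]
    have hb : (k.2:ℝ)^2 ≤ m^2 := by
      have := le_max_right |(k.1:ℝ)| |(k.2:ℝ)|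
      nlinarith [abs_nonneg (k.2:ℝ), sq_abs (k.2:ℝ)]
    linarith
  calc latticeNorm k ≤ Real.sqrt (2*m^2) := key
    _ = Real.sqrt 2 * m := by
        rw [Real.sqrt_mul (by norm_num), Real.sqrt_sq hm0]

lemma latticeNorm_nonneg (k : ℤ × ℤ) : 0 ≤ latticeNorm k := Real.sqrt_nonneg _
def PhiMap (N : ℕ) (hN : 0 < N) (k : {k : ℤ × ℤ // k ≠ 0}) :
    ℕ × ℤ × Fin N × Bool × Bool :=
  (max k.1.1.natAbs k.1.2.natAbs / N,
   (if k.1.2.natAbs ≤ k.1.1.natAbs then k.1.2 else k.1.1),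
   ⟨max k.1.1.natAbs k.1.2.natAbs % N, Nat.mod_lt _ hN⟩,
   decide (k.1.2.natAbs ≤ k.1.1.natAbs),
   decide (0 ≤ (if k.1.2.natAbs ≤ k.1.1.natAbs then k.1.1 else k.1.2)))

lemma PhiMap_injective (N : ℕ) (hN : 0 < N) : Function.Injective (PhiMap N hN) := by
  rintro ⟨⟨a, b⟩, hab⟩ ⟨⟨a', b'⟩, hab'⟩ h
  simp only [PhiMap, Prod.mk.injEq, Fin.mk.injEq] at h
  obtain ⟨h1, h2, h3, h4, h5⟩ := h
  rw [decide_eq_decide] at h4 h5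
  have hm : max a.natAbs b.natAbs = max a'.natAbs b'.natAbs := by
    have e1 := Nat.div_add_mod (max a.natAbs b.natAbs) N
    have e2 := Nat.div_add_mod (max a'.natAbs b'.natAbs) N
    rw [h1, h3] at e1
    omega
  apply Subtype.ext
  simp only [Prod.mk.injEq]
  by_cases hc : b.natAbs ≤ a.natAbs
  · have hc' : b'.natAbs ≤ a'.natAbs := h4.mp hc
    rw [if_pos hc, if_pos hc'] at h2 h5
    rw [max_eq_left hc, max_eq_left hc'] at hm
    exact ⟨by omega, h2⟩
  · have hc' : ¬ b'.natAbs ≤ a'.natAbs := fun hx => hc (h4.mpr hx)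
    rw [if_neg hc, if_neg hc'] at h2 h5
    rw [max_eq_right (le_of_not_ge hc), max_eq_right (le_of_not_ge hc')] at hm
    exact ⟨h2, by omega⟩

lemma max_lt_div_succ_mul (mm N : ℕ) (hN : 0 < N) : mm < (mm / N + 1) * N := by
  rw [Nat.add_mul, one_mul]
  have h1 := Nat.div_add_mod mm N
  have h2 := Nat.mod_lt mm hN
  calc mm = N * (mm / N) + mm % N := h1.symm
    _ < N * (mm / N) + N := Nat.add_lt_add_left h2 _
    _ = mm / N * N + N := by rw [Nat.mul_comm]

noncomputable def WFun (α s β : ℝ) (N : ℕ) (p : ℕ × ℤ × Fin N × Bool × Bool) : ℝ≥0∞ :=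
  if p.2.1.natAbs ≤ (p.1 + 1) * N then
    ENNReal.ofReal ((2:ℝ)^α * β^(2*α) * vA α s p.1) else 0

lemma tsum_WFun (α s β : ℝ) (N : ℕ) :
    ∑' p : ℕ × ℤ × Fin N × Bool × Bool, WFun α s β N p
      = ∑' i : ℕ, ((2*((i+1)*N)+1) * (4*N)) •
          ENNReal.ofReal ((2:ℝ)^α * β^(2*α) * vA α s i) := by
  rw [ENNReal.tsum_prod']
  apply tsum_congr
  intro i
  rw [ENNReal.tsum_prod']
  set V := ENNReal.ofReal ((2:ℝ)^α * β^(2*α) * vA α s i) with hV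
  set M := (i + 1) * N with hM
  have hrow : ∀ c : ℤ,
      (∑' r : Fin N × Bool × Bool, WFun α s β N (i, c, r))
        = (4*N) • (if c.natAbs ≤ M then V else 0) := by
    intro c
    rw [tsum_fintype]
    have : ∀ r : Fin N × Bool × Bool, WFun α s β N (i, c, r)
        = (if c.natAbs ≤ M then V else 0) := fun r => rfl
    simp only [this, Finset.sum_const, Finset.card_univ, Fintype.card_prod,
      Fintype.card_fin, Fintype.card_bool]
    congr 1
    ring
  simp only [hrow]
  have hzero : ∀ c : ℤ, c ∉ Finset.Icc (-(M:ℤ)) (M:ℤ) →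
      (4*N) • (if c.natAbs ≤ M then V else 0) = 0 := by
    intro c hc
    simp only [Finset.mem_Icc] at hc
    rw [if_neg (by omega), smul_zero]
  rw [tsum_eq_sum hzero]
  have hpos : ∀ c ∈ Finset.Icc (-(M:ℤ)) (M:ℤ),
      (4*N) • (if c.natAbs ≤ M then V else 0) = (4*N) • V := by
    intro c hc
    simp only [Finset.mem_Icc] at hc
    rw [if_pos (by omega)]
  rw [Finset.sum_congr rfl hpos, Finset.sum_const, Int.card_Icc]
  rw [smul_smul]
  have hcard : ((M:ℤ) + 1 - -(M:ℤ)).toNat = 2*M+1 := by omega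
  rw [hcard]
lemma core_bound (α s δ β : ℝ) (N : ℕ) (hα : 0 < α) (hs : α + 1 < s)
    (hδ0 : 0 < δ) (hβ0 : 0 < β) (hβ1 : 1 ≤ β)
    (hβ2s : β ^ (2*s) = δ⁻¹) (hβN : β ≤ (N:ℝ)) (hN2β : (N:ℝ) ≤ 2*β)
    (k : ℤ × ℤ) (hk : k ≠ 0) :
    latticeNorm k ^ (2*α) / (1 + δ * latticeNorm k ^ (2*s))
      ≤ (2:ℝ)^α * β^(2*α) * vA α s (max k.1.natAbs k.2.natAbs / N) := by
  have hNpos : 0 < N := by exact_mod_cast lt_of_lt_of_le (by linarith : (0:ℝ) < (N:ℝ)) le_rfl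
  set m := max k.1.natAbs k.2.natAbs with hm
  set x := latticeNorm k with hxdef
  have hx0 : 0 ≤ x := latticeNorm_nonneg k
  have hxm : ((m:ℕ):ℝ) ≤ x := latticeNorm_lower k
  have hxup : x ≤ Real.sqrt 2 * ((m:ℕ):ℝ) := latticeNorm_upper k
  have hsqrt2 : Real.sqrt 2 ^ (2*α) = (2:ℝ)^α := by
    rw [show (2:ℝ)*α = ((2:ℕ):ℝ)*α by norm_num, Real.rpow_mul (Real.sqrt_nonneg 2),
      Real.rpow_natCast, Real.sq_sqrt (by norm_num : (0:ℝ) ≤ 2)]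
  have hdenpos : (0:ℝ) < 1 + δ * x ^ (2*s) := by positivity
  by_cases hi : m / N = 0
  · -- small case
    rw [hi]
    have hmN : m < N := (Nat.div_eq_zero_iff.mp hi).resolve_left hNpos.ne'
    have hm2β : ((m:ℕ):ℝ) ≤ 2*β := by
      calc ((m:ℕ):ℝ) ≤ (N:ℝ) := by exact_mod_cast hmN.le
        _ ≤ 2*β := hN2β
    have hxle : x ≤ Real.sqrt 2 * (2*β) := by
      calc x ≤ Real.sqrt 2 * ((m:ℕ):ℝ) := hxup
        _ ≤ Real.sqrt 2 * (2*β) := by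
            apply mul_le_mul_of_nonneg_left hm2β (Real.sqrt_nonneg 2)
    calc x ^ (2*α) / (1 + δ * x ^ (2*s)) ≤ x ^ (2*α) / 1 := by
          apply div_le_div_of_nonneg_left (by positivity) (by norm_num) (by nlinarith [Real.rpow_nonneg hx0 (2*s)])
      _ = x ^ (2*α) := by rw [div_one]
      _ ≤ (Real.sqrt 2 * (2*β)) ^ (2*α) := by
          apply Real.rpow_le_rpow hx0 hxle (by linarith)
      _ = (2:ℝ)^α * β^(2*α) * vA α s 0 := by
          rw [Real.mul_rpow (Real.sqrt_nonneg 2) (by linarith), hsqrt2,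
            Real.mul_rpow (by norm_num : (0:ℝ) ≤ 2) (le_of_lt hβ0)]
          rw [show vA α s 0 = (2:ℝ)^(2*α) from if_pos rfl]
          ring
  · -- large case
    have hi1 : 1 ≤ m / N := Nat.one_le_iff_ne_zero.mpr hi
    set i := m / N with hidef
    have hNim : i * N ≤ m := Nat.div_mul_le_self m N
    have hiβm : (i:ℝ) * β ≤ ((m:ℕ):ℝ) := by
      calc (i:ℝ) * β ≤ (i:ℝ) * (N:ℝ) := by
            apply mul_le_mul_of_nonneg_left hβN (by positivity)
        _ ≤ ((m:ℕ):ℝ) := by exact_mod_cast hNim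
    have hi1' : (1:ℝ) ≤ (i:ℝ) := by exact_mod_cast hi1
    have hiβpos : (0:ℝ) < (i:ℝ) * β := by positivity
    have hx1 : (1:ℝ) ≤ x := by nlinarith
    have hxpos : (0:ℝ) < x := by linarith
    have step1 : x ^ (2*α) / (1 + δ * x ^ (2*s)) ≤ x ^ (2*α) / (δ * x ^ (2*s)) := by
      apply div_le_div_of_nonneg_left (by positivity) (by positivity) (by nlinarith [Real.rpow_nonneg hx0 (2*s)])
    have step2 : x ^ (2*α) / (δ * x ^ (2*s)) = δ⁻¹ * x ^ (2*α - 2*s) := by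
      rw [Real.rpow_sub hxpos]
      field_simp
    have step3 : x ^ (2*α - 2*s) ≤ ((i:ℝ)*β) ^ (2*α - 2*s) := by
      apply Real.rpow_le_rpow_of_nonpos hiβpos (by nlinarith) (by linarith)
    have step4 : δ⁻¹ * (((i:ℝ)*β) ^ (2*α - 2*s)) = β^(2*α) * (i:ℝ)^(2*α-2*s) := by
      have hββ : β ^ (2*s) * β ^ (2*α-2*s) = β ^ (2*α) := by
        rw [← Real.rpow_add hβ0]; ring_nf
      rw [← hβ2s, Real.mul_rpow (by positivity) (le_of_lt hβ0)]
      linear_combination ((i:ℝ)^(2*α-2*s)) * hββ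
    have h2α1 : (1:ℝ) ≤ (2:ℝ)^α := Real.one_le_rpow (by norm_num) (le_of_lt hα)
    have hvi : vA α s i = (i:ℝ)^(2*α-2*s) := by
      simp [vA, hi]
    rw [hvi]
    have hnn : (0:ℝ) ≤ β^(2*α) * (i:ℝ)^(2*α-2*s) := by positivity
    calc x ^ (2*α) / (1 + δ * x ^ (2*s)) ≤ δ⁻¹ * x ^ (2*α - 2*s) := by
          rw [← step2]; exact step1
      _ ≤ δ⁻¹ * (((i:ℝ)*β) ^ (2*α - 2*s)) := by
          apply mul_le_mul_of_nonneg_left step3 (by positivity)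
      _ = β^(2*α) * (i:ℝ)^(2*α-2*s) := step4
      _ ≤ (2:ℝ)^α * (β^(2*α) * (i:ℝ)^(2*α-2*s)) := by nlinarith
      _ = (2:ℝ)^α * β^(2*α) * (i:ℝ)^(2*α-2*s) := by ring

lemma term_bound (α s β : ℝ) (N : ℕ) (hα : 0 < α) (hβ0 : 0 < β) (hβ1 : 1 ≤ β)
    (hN2β : (N:ℝ) ≤ 2*β) (i : ℕ) :
    ((2*((i+1)*N)+1) * (4*N)) • ENNReal.ofReal ((2:ℝ)^α * β^(2*α) * vA α s i)
      ≤ ENNReal.ofReal ((48 * (2:ℝ)^α * β^(2*α+2)) * (((i:ℝ)+1) * vA α s i)) := by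
  rw [nsmul_eq_mul, ← ENNReal.ofReal_natCast, ← ENNReal.ofReal_mul (by positivity)]
  apply ENNReal.ofReal_le_ofReal
  have hX : (0:ℝ) ≤ (2:ℝ)^α * β^(2*α) * vA α s i := by
    have := vA_nonneg α s i; positivity
  have hi0 : (0:ℝ) ≤ (i:ℝ) := Nat.cast_nonneg i
  have hNN : ((N:ℝ))*(N:ℝ) ≤ 4*(β*β) := by nlinarith
  have hA : (((2*((i+1)*N)+1) * (4*N) : ℕ) : ℝ) ≤ 48*((i:ℝ)+1)*(β*β) := by
    push_cast
    nlinarith [mul_le_mul_of_nonneg_left hNN (by positivity : (0:ℝ) ≤ (i:ℝ)+1)]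
  have hββ : β^(2*α+2) = β^(2*α)*(β*β) := by
    rw [show 2*α+2 = 2*α+1+1 by ring, Real.rpow_add hβ0, Real.rpow_add hβ0, Real.rpow_one]
    ring
  calc (((2*((i+1)*N)+1) * (4*N) : ℕ) : ℝ) * ((2:ℝ)^α * β^(2*α) * vA α s i)
      ≤ (48*((i:ℝ)+1)*(β*β)) * ((2:ℝ)^α * β^(2*α) * vA α s i) :=
        mul_le_mul_of_nonneg_right hA hX
    _ = 48 * (2:ℝ)^α * β^(2*α+2) * (((i:ℝ)+1) * vA α s i) := by rw [hββ]; ring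

/-- Blow-up estimate for `∑_{k ≠ 0} ‖k‖^{2α} / (1 + δ‖k‖^{2s})`. -/
theorem stmt_0 (α s : ℝ) (hα : 0 < α) (hs : α + 1 < s) :
    ∃ C : ℝ, 0 < C ∧ ∀ δ : ℝ, δ ∈ Set.Ioc (0 : ℝ) 1 →
      (∑' k : {k : ℤ × ℤ // k ≠ 0},
          ENNReal.ofReal
            (latticeNorm k ^ (2 * α) / (1 + δ * latticeNorm k ^ (2 * s))))
        ≤ ENNReal.ofReal (C * δ ^ (-(α + 1) / s)) := by
  have hs0 : (0:ℝ) < s := by linarith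
  have hKsum := summable_vA α s hs
  set K := ∑' i : ℕ, ((i:ℝ) + 1) * vA α s i with hKdef
  have hK0 : 0 < K := by
    have h0 : (((0:ℕ):ℝ) + 1) * vA α s 0 ≤ K := by
      exact hKsum.le_tsum 0 (fun j _ => mul_nonneg (by positivity) (vA_nonneg _ _ _))
    have hv0 : vA α s 0 = (2:ℝ)^(2*α) := if_pos rfl
    nlinarith [Real.rpow_pos_of_pos (by norm_num : (0:ℝ) < 2) (2*α)]
  refine ⟨48 * (2:ℝ)^α * K, by positivity, ?_⟩
  rintro δ ⟨hδ0, hδ1⟩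
  set β := δ ^ (-1/(2*s)) with hβdef
  have hβ0 : 0 < β := Real.rpow_pos_of_pos hδ0 _
  have hexp : -1/(2*s) ≤ 0 := le_of_lt (div_neg_of_neg_of_pos (by norm_num) (by linarith))
  have hβ1 : 1 ≤ β := Real.one_le_rpow_of_pos_of_le_one_of_nonpos hδ0 hδ1 hexp
  have hβ2s : β ^ (2*s) = δ⁻¹ := by
    rw [hβdef, ← Real.rpow_mul hδ0.le,
      show (-1/(2*s))*(2*s) = -1 by field_simp, Real.rpow_neg_one]
  have hβfinal : β ^ (2*α+2) = δ ^ (-(α+1)/s) := by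
    rw [hβdef, ← Real.rpow_mul hδ0.le]
    congr 1
    field_simp
  set N := ⌈β⌉₊ with hNdef
  have hβN : β ≤ (N:ℝ) := Nat.le_ceil β
  have hN2β : (N:ℝ) ≤ 2*β := by
    have := Nat.ceil_lt_add_one hβ0.le
    linarith
  have hNpos : 0 < N := by
    have h1 : (1:ℝ) ≤ (N:ℝ) := le_trans hβ1 hβN
    exact_mod_cast lt_of_lt_of_le zero_lt_one h1
  -- pointwise bound
  have hpoint : ∀ k : {k : ℤ × ℤ // k ≠ 0},
      ENNReal.ofReal (latticeNorm k.1 ^ (2*α) / (1 + δ * latticeNorm k.1 ^ (2*s)))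
        ≤ WFun α s β N (PhiMap N hNpos k) := by
    intro k
    have hcond : (if k.1.2.natAbs ≤ k.1.1.natAbs then k.1.2 else k.1.1).natAbs
        ≤ (max k.1.1.natAbs k.1.2.natAbs / N + 1) * N := by
      have hlt := max_lt_div_succ_mul (max k.1.1.natAbs k.1.2.natAbs) N hNpos
      have hle : (if k.1.2.natAbs ≤ k.1.1.natAbs then k.1.2 else k.1.1).natAbs
          ≤ max k.1.1.natAbs k.1.2.natAbs := by
        split
        · exact le_max_right _ _
        · exact le_max_left _ _
      omega
    have : WFun α s β N (PhiMap N hNpos k)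
        = ENNReal.ofReal ((2:ℝ)^α * β^(2*α) * vA α s (max k.1.1.natAbs k.1.2.natAbs / N)) := by
      simp only [WFun, PhiMap]
      exact if_pos hcond
    rw [this]
    exact ENNReal.ofReal_le_ofReal
      (core_bound α s δ β N hα hs hδ0 hβ0 hβ1 hβ2s hβN hN2β k.1 k.2)
  calc (∑' k : {k : ℤ × ℤ // k ≠ 0},
          ENNReal.ofReal
            (latticeNorm k.1 ^ (2 * α) / (1 + δ * latticeNorm k.1 ^ (2 * s))))
      ≤ ∑' k : {k : ℤ × ℤ // k ≠ 0}, WFun α s β N (PhiMap N hNpos k) :=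
        ENNReal.tsum_le_tsum hpoint
    _ ≤ ∑' p : ℕ × ℤ × Fin N × Bool × Bool, WFun α s β N p :=
        ENNReal.tsum_comp_le_tsum_of_injective (PhiMap_injective N hNpos) _
    _ = ∑' i : ℕ, ((2*((i+1)*N)+1) * (4*N)) •
          ENNReal.ofReal ((2:ℝ)^α * β^(2*α) * vA α s i) := tsum_WFun α s β N
    _ ≤ ∑' i : ℕ, ENNReal.ofReal ((48 * (2:ℝ)^α * β^(2*α+2)) * (((i:ℝ)+1) * vA α s i)) :=
        ENNReal.tsum_le_tsum (fun i => term_bound α s β N hα hβ0 hβ1 hN2β i)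
    _ = ∑' i : ℕ, ENNReal.ofReal (48 * (2:ℝ)^α * β^(2*α+2))
          * ENNReal.ofReal (((i:ℝ)+1) * vA α s i) := by
        apply tsum_congr
        intro i
        rw [← ENNReal.ofReal_mul (by positivity)]
    _ = ENNReal.ofReal (48 * (2:ℝ)^α * β^(2*α+2)) * ∑' i : ℕ,
          ENNReal.ofReal (((i:ℝ)+1) * vA α s i) := ENNReal.tsum_mul_left
    _ = ENNReal.ofReal (48 * (2:ℝ)^α * β^(2*α+2)) * ENNReal.ofReal K := by
        rw [← ENNReal.ofReal_tsum_of_nonneg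
          (fun i => mul_nonneg (by positivity) (vA_nonneg _ _ _)) hKsum]
    _ = ENNReal.ofReal (48 * (2:ℝ)^α * β^(2*α+2) * K) := by
        rw [← ENNReal.ofReal_mul (by positivity)]
    _ ≤ ENNReal.ofReal (48 * (2:ℝ)^α * K * δ ^ (-(α + 1) / s)) := by
        apply ENNReal.ofReal_le_ofReal
        rw [← hβfinal]
        ring_nf
        exact le_refl _
end

section
/- Let X be a regular Hausdorff topological space equipped with its Borel σ-algebra, let 𝔗 : X → X be a continuous map with 𝔗 ∘ 𝔗 = id, let I : X → [0,∞] be lower semicontinuous, let C ⊆ X, and for each ε ∈ (0,1) let μ_ε be a Borel probability measure on X whose pushforward under 𝔗 equals μ_ε. Assume: (i) for every closed set F ⊆ X, limsup_{ε→0⁺} ε·log μ_ε(F) ≤ −inf_{x∈F} I(x); and (ii) for every open set G ⊆ X, liminf_{ε→0⁺} ε·log μ_ε(G) ≥ −inf_{x∈G∩C} I(x); with the conventions log 0 = −∞ and inf over the empty set = +∞. Then I(𝔗θ) ≤ I(θ) for every θ ∈ C. Consequently, if θ ∈ C and 𝔗θ ∈ C, then I(𝔗θ) = I(θ). -/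
open MeasureTheory Filter
open scoped ENNReal Topology

/-- Time-reversal invariance and matching large-deviations bounds force the rate function
to be invariant under time reversal: if the measures `μ_ε` are invariant under a
continuous involution `𝔗`, satisfy the large deviations upper bound with rate `I` on all
closed sets and the lower bound restricted to `C` on all open sets, then `I(𝔗θ) ≤ I(θ)`
for every `θ ∈ C`; consequently `I(𝔗θ) = I(θ)` whenever both `θ ∈ C` and `𝔗θ ∈ C`. -/
theorem stmt_17 {X : Type*} [TopologicalSpace X] [T2Space X] [RegularSpace X]
    [MeasurableSpace X] [BorelSpace X]
    (𝔗 : X → X) (h𝔗c : Continuous 𝔗) (h𝔗i : 𝔗 ∘ 𝔗 = id)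
    (I : X → ℝ≥0∞) (hI : LowerSemicontinuous I) (C : Set X)
    (μ : ℝ → Measure X)
    (hprob : ∀ ε ∈ Set.Ioo (0 : ℝ) 1, IsProbabilityMeasure (μ ε))
    (hinv : ∀ ε ∈ Set.Ioo (0 : ℝ) 1, (μ ε).map 𝔗 = μ ε)
    (hupper : ∀ F : Set X, IsClosed F →
      limsup (fun ε : ℝ => (ε : EReal) * ENNReal.log (μ ε F)) (𝓝[>] (0 : ℝ))
        ≤ -((⨅ x ∈ F, I x : ℝ≥0∞) : EReal))
    (hlower : ∀ G : Set X, IsOpen G →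
      -((⨅ x ∈ G ∩ C, I x : ℝ≥0∞) : EReal)
        ≤ liminf (fun ε : ℝ => (ε : EReal) * ENNReal.log (μ ε G)) (𝓝[>] (0 : ℝ))) :
    (∀ θ ∈ C, I (𝔗 θ) ≤ I θ) ∧
    (∀ θ ∈ C, 𝔗 θ ∈ C → I (𝔗 θ) = I θ) := by
  have key : ∀ θ ∈ C, I (𝔗 θ) ≤ I θ := by
    intro θ hθ
    by_contra h
    push_neg at h
    obtain ⟨c, hc1, hc2⟩ := exists_between h
    have hU : ∀ᶠ x in 𝓝 (𝔗 θ), c < I x := hI (𝔗 θ) c hc2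
    obtain ⟨F, ⟨hFnhds, hFclosed⟩, hFsub⟩ := (closed_nhds_basis (𝔗 θ)).mem_iff.mp hU
    set G := 𝔗 ⁻¹' (interior F) with hG
    have hGopen : IsOpen G := isOpen_interior.preimage h𝔗c
    have hθG : θ ∈ G := by
      show 𝔗 θ ∈ interior F
      exact mem_interior_iff_mem_nhds.mpr hFnhds
    have hmeas : ∀ ε ∈ Set.Ioo (0:ℝ) 1, μ ε G = μ ε (interior F) := by
      intro ε hε
      conv_rhs => rw [← hinv ε hε]
      rw [Measure.map_apply h𝔗c.measurable isOpen_interior.measurableSet]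
    have hev : ∀ᶠ (ε : ℝ) in 𝓝[>] (0:ℝ),
        (ε : EReal) * ENNReal.log (μ ε G) ≤ (ε : EReal) * ENNReal.log (μ ε F) := by
      filter_upwards [Ioo_mem_nhdsGT_of_mem ⟨le_refl 0, one_pos⟩] with ε hε
      have h1 : μ ε G ≤ μ ε F := by
        rw [hmeas ε hε]; exact measure_mono interior_subset
      have h2 : ENNReal.log (μ ε G) ≤ ENNReal.log (μ ε F) :=
        ENNReal.log_monotone h1
      exact mul_le_mul_of_nonneg_left h2 (by exact_mod_cast le_of_lt hε.1)
    have h1 : -(I θ : EReal) ≤ -((⨅ x ∈ G ∩ C, I x : ℝ≥0∞) : EReal) := by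
      rw [EReal.neg_le_neg_iff]
      have hle : (⨅ x ∈ G ∩ C, I x) ≤ I θ := biInf_le I ⟨hθG, hθ⟩
      exact_mod_cast hle
    have h2 := hlower G hGopen
    have h3 : liminf (fun ε : ℝ => (ε : EReal) * ENNReal.log (μ ε G)) (𝓝[>] (0:ℝ))
        ≤ limsup (fun ε : ℝ => (ε : EReal) * ENNReal.log (μ ε F)) (𝓝[>] (0:ℝ)) :=
      (liminf_le_liminf hev).trans liminf_le_limsup
    have h4 := hupper F hFclosed
    have h5 : -((⨅ x ∈ F, I x : ℝ≥0∞) : EReal) ≤ -(c : EReal) := by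
      rw [EReal.neg_le_neg_iff]
      have hle : c ≤ ⨅ x ∈ F, I x := le_iInf₂ fun x hx => (hFsub hx).le
      exact_mod_cast hle
    have : -(I θ : EReal) ≤ -(c : EReal) := h1.trans (h2.trans (h3.trans (h4.trans h5)))
    rw [EReal.neg_le_neg_iff, EReal.coe_ennreal_le_coe_ennreal_iff] at this
    exact absurd this (not_le.mpr hc1)
  refine ⟨key, fun θ hθ hθ' => ?_⟩
  refine le_antisymm (key θ hθ) ?_
  have := key (𝔗 θ) hθ'
  rwa [show 𝔗 (𝔗 θ) = θ from congrFun h𝔗i θ] at this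
end

section
/- Let s > 1 be a real number. Then there exists a constant C > 0, depending only on s, such that for every δ ∈ (0,1] and every η ∈ (0, 1/2]: ∑_{k∈ℤ²∖{0}} (−1/2)·log( 1 − η/(1 + δ·‖k‖^{2s}) ) ≤ η · ∑_{k∈ℤ²∖{0}} 1/(1 + δ·‖k‖^{2s}) ≤ C·η·δ^{−1/s}, and in particular both series converge. -/
open scoped ENNReal

/-- The auxiliary zeta-like constant `∑_{q≥0} (q+1)^{-s}`. -/
noncomputable def zconst (s : ℝ) : ℝ := ∑' q : ℕ, ((q : ℝ) + 1) ^ (-s)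

lemma zconst_summable {s : ℝ} (hs : 1 < s) :
    Summable (fun q : ℕ => ((q : ℝ) + 1) ^ (-s)) := by
  have h := Real.summable_one_div_nat_rpow.2 hs
  have h2 := (summable_nat_add_iff (f := fun n : ℕ => 1 / (n : ℝ) ^ s) 1).2 h
  refine h2.congr fun q => ?_
  push_cast
  rw [Real.rpow_neg (by positivity), one_div]

lemma one_le_zconst {s : ℝ} (hs : 1 < s) : 1 ≤ zconst s := by
  have h := Summable.le_tsum (zconst_summable hs) 0
    (fun j _ => Real.rpow_nonneg (by positivity) _)
  simpa [zconst] using h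

lemma nat_sum_bound {s : ℝ} (hs : 1 < s) {R : ℝ} (hR : 1 ≤ R) :
    ∑' n : ℕ, ENNReal.ofReal ((1 + (n : ℝ) / R) ^ (-s)) ≤
      ENNReal.ofReal (2 * zconst s * R) := by
  have hR0 : (0 : ℝ) < R := lt_of_lt_of_le one_pos hR
  set N := ⌈R⌉₊ with hNdef
  have hN1 : 1 ≤ N := Nat.one_le_ceil_iff.2 hR0
  haveI : NeZero N := ⟨by omega⟩
  set F : ℕ → ℝ≥0∞ := fun n => ENNReal.ofReal ((1 + (n : ℝ) / R) ^ (-s)) with hF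
  have he : ∑' n : ℕ, F n = ∑' p : ℕ × Fin N, F ((Nat.divModEquiv N).symm p) :=
    ((Nat.divModEquiv N).symm.tsum_eq F).symm
  have hpt : ∀ p : ℕ × Fin N, F ((Nat.divModEquiv N).symm p) ≤
      ENNReal.ofReal (((p.1 : ℝ) + 1) ^ (-s)) := by
    intro p
    rw [Nat.divModEquiv_symm_apply]
    apply ENNReal.ofReal_le_ofReal
    apply Real.rpow_le_rpow_of_nonpos (by positivity) ?_ (by linarith)
    have h1 : (p.1 : ℝ) * R ≤ ((p.1 * N + (p.2 : ℕ) : ℕ) : ℝ) := by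
      push_cast
      have : (p.1 : ℝ) * R ≤ (p.1 : ℝ) * (N : ℝ) :=
        mul_le_mul_of_nonneg_left (Nat.le_ceil R) (by positivity)
      have h2 : (0 : ℝ) ≤ ((p.2 : ℕ) : ℝ) := by positivity
      linarith
    have h2 : (p.1 : ℝ) ≤ ((p.1 * N + (p.2 : ℕ) : ℕ) : ℝ) / R := (le_div_iff₀ hR0).2 h1
    linarith
  have hsum : ∑' p : ℕ × Fin N, ENNReal.ofReal (((p.1 : ℝ) + 1) ^ (-s)) =
      (N : ℝ≥0∞) * ENNReal.ofReal (zconst s) := by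
    rw [ENNReal.tsum_prod']
    have : ∀ q : ℕ, ∑' _ : Fin N, ENNReal.ofReal (((q : ℝ) + 1) ^ (-s)) =
        (N : ℝ≥0∞) * ENNReal.ofReal (((q : ℝ) + 1) ^ (-s)) := by
      intro q
      simp [tsum_fintype, Finset.sum_const, nsmul_eq_mul]
    simp_rw [this]
    rw [ENNReal.tsum_mul_left]
    congr 1
    rw [zconst, ENNReal.ofReal_tsum_of_nonneg
      (fun q => Real.rpow_nonneg (by positivity) _) (zconst_summable hs)]
  calc ∑' n : ℕ, F n = ∑' p : ℕ × Fin N, F ((Nat.divModEquiv N).symm p) := he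
    _ ≤ ∑' p : ℕ × Fin N, ENNReal.ofReal (((p.1 : ℝ) + 1) ^ (-s)) :=
        ENNReal.tsum_le_tsum hpt
    _ = (N : ℝ≥0∞) * ENNReal.ofReal (zconst s) := hsum
    _ ≤ ENNReal.ofReal (2 * R) * ENNReal.ofReal (zconst s) := by
        gcongr
        rw [← ENNReal.ofReal_natCast N]
        apply ENNReal.ofReal_le_ofReal
        have := Nat.ceil_lt_add_one hR0.le
        rw [← hNdef] at this
        linarith
    _ = ENNReal.ofReal (2 * zconst s * R) := by
        rw [← ENNReal.ofReal_mul (by positivity)]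
        ring_nf

lemma int_sum_bound {s : ℝ} (hs : 1 < s) {R : ℝ} (hR : 1 ≤ R) :
    ∑' n : ℤ, ENNReal.ofReal ((1 + |(n : ℝ)| / R) ^ (-s)) ≤
      ENNReal.ofReal (4 * zconst s * R) := by
  have hR0 : (0 : ℝ) < R := lt_of_lt_of_le one_pos hR
  set g : ℤ → ℝ≥0∞ := fun n => ENNReal.ofReal ((1 + |(n : ℝ)| / R) ^ (-s)) with hg
  have hsplit : ∑' n : ℤ, g n = ∑' n : ℕ, (g n + g (-(n + 1))) :=
    (tsum_nat_add_neg_add_one ENNReal.summable).symm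
  have h1 : ∀ n : ℕ, g n = ENNReal.ofReal ((1 + (n : ℝ) / R) ^ (-s)) := by
    intro n
    simp only [hg]
    congr 2
    rw [Int.cast_natCast, abs_of_nonneg (by positivity)]
  have h2 : ∀ n : ℕ, g (-(n + 1)) ≤ ENNReal.ofReal ((1 + (n : ℝ) / R) ^ (-s)) := by
    intro n
    simp only [hg]
    apply ENNReal.ofReal_le_ofReal
    have habs : |((-((n : ℤ) + 1) : ℤ) : ℝ)| = (n : ℝ) + 1 := by
      push_cast
      rw [abs_neg, abs_of_nonneg (by positivity)]
    have hbase : (1 : ℝ) + (n : ℝ) / R ≤ 1 + |((-((n : ℤ) + 1) : ℤ) : ℝ)| / R := by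
      rw [habs]
      have : (n : ℝ) / R ≤ ((n : ℝ) + 1) / R := by gcongr <;> linarith
      linarith
    exact Real.rpow_le_rpow_of_nonpos (by positivity) hbase (by linarith)
  calc ∑' n : ℤ, g n = ∑' n : ℕ, (g n + g (-(n + 1))) := hsplit
    _ = (∑' n : ℕ, g n) + ∑' n : ℕ, g (-(n + 1)) := ENNReal.tsum_add
    _ ≤ ENNReal.ofReal (2 * zconst s * R) + ENNReal.ofReal (2 * zconst s * R) := by
        gcongr
        · calc ∑' n : ℕ, g n = ∑' n : ℕ, ENNReal.ofReal ((1 + (n : ℝ) / R) ^ (-s)) :=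
              tsum_congr h1
            _ ≤ _ := nat_sum_bound hs hR
        · calc ∑' n : ℕ, g (-(n + 1)) ≤
              ∑' n : ℕ, ENNReal.ofReal ((1 + (n : ℝ) / R) ^ (-s)) := ENNReal.tsum_le_tsum h2
            _ ≤ _ := nat_sum_bound hs hR
    _ = ENNReal.ofReal (4 * zconst s * R) := by
        have hz := one_le_zconst hs
        rw [← ENNReal.ofReal_add (by nlinarith) (by nlinarith)]
        ring_nf

lemma pointwise_bound {s δ : ℝ} (hs : 1 < s) (hδ : 0 < δ) {R : ℝ} (hR0 : 0 < R)
    (hRs : R ^ (2 * s) = δ⁻¹) (k : ℤ × ℤ) :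
    1 / (1 + δ * latticeNorm k ^ (2 * s)) ≤
      (2 : ℝ) ^ (2 * s) * (1 + |(k.1 : ℝ)| / R) ^ (-s) * (1 + |(k.2 : ℝ)| / R) ^ (-s) := by
  set t := latticeNorm k with htdef
  have ht0 : 0 ≤ t := Real.sqrt_nonneg _
  have ha' : |(k.1 : ℝ)| ≤ t := by
    rw [htdef, latticeNorm, ← Real.sqrt_sq_eq_abs]
    exact Real.sqrt_le_sqrt (by nlinarith [sq_nonneg ((k.2 : ℝ))])
  have hb' : |(k.2 : ℝ)| ≤ t := by
    rw [htdef, latticeNorm, ← Real.sqrt_sq_eq_abs]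
    exact Real.sqrt_le_sqrt (by nlinarith [sq_nonneg ((k.1 : ℝ))])
  set a := |(k.1 : ℝ)| / R with hadef
  set b := |(k.2 : ℝ)| / R with hbdef
  set x := t / R with hxdef
  have ha0 : 0 ≤ a := by rw [hadef]; positivity
  have hb0 : 0 ≤ b := by rw [hbdef]; positivity
  have hx0 : 0 ≤ x := by rw [hxdef]; positivity
  have hax : a ≤ x := by rw [hadef, hxdef]; gcongr
  have hbx : b ≤ x := by rw [hbdef, hxdef]; gcongr
  have hxD : x ^ (2 * s) = δ * t ^ (2 * s) := by
    rw [hxdef, Real.div_rpow ht0 hR0.le, hRs, div_eq_mul_inv, inv_inv, mul_comm]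
  have hDnn : 0 ≤ δ * t ^ (2 * s) := mul_nonneg hδ.le (Real.rpow_nonneg ht0 _)
  have hden : (0 : ℝ) < 1 + δ * t ^ (2 * s) := by linarith
  have hK0 : (0 : ℝ) < (2 : ℝ) ^ (2 * s) := Real.rpow_pos_of_pos two_pos _
  have key1 : (1 + a) * (1 + b) ≤ (1 + x) ^ 2 := by nlinarith
  have key2 : ((1 + x) ^ 2) ^ s ≤ (2 : ℝ) ^ (2 * s) * (1 + x ^ (2 * s)) := by
    have hxs0 : 0 ≤ x ^ (2 * s) := Real.rpow_nonneg hx0 _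
    rcases le_total x 1 with h | h
    · have h4 : ((1 + x) ^ 2 : ℝ) ≤ 4 := by nlinarith
      calc ((1 + x) ^ 2) ^ s ≤ (4 : ℝ) ^ s :=
            Real.rpow_le_rpow (by positivity) h4 (by linarith)
        _ = (2 : ℝ) ^ (2 * s) := by
            rw [show (4 : ℝ) = (2 : ℝ) ^ (2 : ℕ) by norm_num, ← Real.rpow_natCast (2 : ℝ) 2,
              ← Real.rpow_mul (by norm_num)]
            norm_num
        _ ≤ (2 : ℝ) ^ (2 * s) * (1 + x ^ (2 * s)) :=
            le_mul_of_one_le_right hK0.le (by linarith)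
    · have h4 : ((1 + x) ^ 2 : ℝ) ≤ (2 * x) ^ 2 := by nlinarith
      calc ((1 + x) ^ 2) ^ s ≤ ((2 * x) ^ 2) ^ s :=
            Real.rpow_le_rpow (by positivity) h4 (by linarith)
        _ = (2 : ℝ) ^ (2 * s) * x ^ (2 * s) := by
            rw [← Real.rpow_natCast (2 * x) 2, ← Real.rpow_mul (by positivity),
              Real.mul_rpow (by norm_num) hx0]
            norm_num
        _ ≤ (2 : ℝ) ^ (2 * s) * (1 + x ^ (2 * s)) := by nlinarith
  have key3 : ((1 + a) * (1 + b)) ^ s ≤ ((1 + x) ^ 2) ^ s :=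
    Real.rpow_le_rpow (by positivity) key1 (by linarith)
  have hmul : ((1 + a) * (1 + b)) ^ s = (1 + a) ^ s * (1 + b) ^ s :=
    Real.mul_rpow (by linarith) (by linarith)
  have h5 : (1 + a) ^ s * (1 + b) ^ s ≤ (2 : ℝ) ^ (2 * s) * (1 + δ * t ^ (2 * s)) := by
    rw [← hmul, ← hxD]
    exact key3.trans key2
  have hA : (0 : ℝ) < (1 + a) ^ s := Real.rpow_pos_of_pos (by linarith) _
  have hB : (0 : ℝ) < (1 + b) ^ s := Real.rpow_pos_of_pos (by linarith) _
  have h6 : 1 / (1 + δ * t ^ (2 * s)) ≤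
      (2 : ℝ) ^ (2 * s) / ((1 + a) ^ s * (1 + b) ^ s) := by
    rw [div_le_div_iff₀ hden (by positivity)]
    nlinarith
  calc 1 / (1 + δ * t ^ (2 * s)) ≤ (2 : ℝ) ^ (2 * s) / ((1 + a) ^ s * (1 + b) ^ s) := h6
    _ = (2 : ℝ) ^ (2 * s) * (1 + a) ^ (-s) * (1 + b) ^ (-s) := by
        rw [Real.rpow_neg (by linarith), Real.rpow_neg (by linarith), div_eq_mul_inv,
          mul_inv, ← mul_assoc]

/-- Logarithmic moment generating function bound for the regularized Gaussian initial
data: `∑_{k≠0} (−1/2) log(1 − η/(1+δ‖k‖^{2s})) ≤ η ∑_{k≠0} 1/(1+δ‖k‖^{2s}) ≤ C η δ^{−1/s}`. -/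
theorem stmt_18 (s : ℝ) (hs : 1 < s) :
    ∃ C : ℝ, 0 < C ∧ ∀ δ : ℝ, δ ∈ Set.Ioc (0 : ℝ) 1 →
      ∀ η : ℝ, η ∈ Set.Ioc (0 : ℝ) (1 / 2) →
        (∑' k : {k : ℤ × ℤ // k ≠ 0},
            ENNReal.ofReal
              ((-(1 / 2)) * Real.log (1 - η / (1 + δ * latticeNorm k ^ (2 * s)))))
          ≤ ENNReal.ofReal η *
              ∑' k : {k : ℤ × ℤ // k ≠ 0},
                ENNReal.ofReal (1 / (1 + δ * latticeNorm k ^ (2 * s))) ∧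
        ENNReal.ofReal η *
            (∑' k : {k : ℤ × ℤ // k ≠ 0},
              ENNReal.ofReal (1 / (1 + δ * latticeNorm k ^ (2 * s))))
          ≤ ENNReal.ofReal (C * η * δ ^ (-1 / s)) := by
  have hs0 : (0 : ℝ) < s := by linarith
  have hz1 : 1 ≤ zconst s := one_le_zconst hs
  have hK0 : (0 : ℝ) < (2 : ℝ) ^ (2 * s) := Real.rpow_pos_of_pos two_pos _
  have hz2 : (0 : ℝ) < zconst s ^ 2 := by nlinarith
  refine ⟨16 * (2 : ℝ) ^ (2 * s) * zconst s ^ 2, by nlinarith [mul_pos hK0 hz2], ?_⟩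
  intro δ hδ η hη
  obtain ⟨hδ0, hδ1⟩ := hδ
  obtain ⟨hη0, hη2⟩ := hη
  constructor
  · -- first inequality
    rw [← ENNReal.tsum_mul_left]
    apply ENNReal.tsum_le_tsum
    intro k
    have hDnn : 0 ≤ δ * latticeNorm (k : ℤ × ℤ) ^ (2 * s) :=
      mul_nonneg hδ0.le (Real.rpow_nonneg (Real.sqrt_nonneg _) _)
    have hden : (0 : ℝ) < 1 + δ * latticeNorm (k : ℤ × ℤ) ^ (2 * s) := by linarith
    set x := η / (1 + δ * latticeNorm (k : ℤ × ℤ) ^ (2 * s)) with hx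
    have hx0 : 0 < x := div_pos hη0 hden
    have hx2 : x ≤ 1 / 2 := le_trans (div_le_self hη0.le (by linarith)) hη2
    have h1 : (0 : ℝ) < 1 - x := by linarith
    have hlog : -(Real.log (1 - x)) ≤ 2 * x := by
      have h2 := Real.log_le_sub_one_of_pos (inv_pos.2 h1)
      rw [Real.log_inv] at h2
      have h4 : (1 - x)⁻¹ ≤ 2 := by
        rw [show (2 : ℝ) = ((1 : ℝ) / 2)⁻¹ by norm_num]
        exact inv_anti₀ (by norm_num) (by linarith)
      have h5 : (1 - x)⁻¹ - 1 = x * (1 - x)⁻¹ := by field_simp; ring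
      nlinarith [mul_le_mul_of_nonneg_left h4 hx0.le]
    rw [← ENNReal.ofReal_mul hη0.le]
    apply ENNReal.ofReal_le_ofReal
    rw [mul_one_div]
    linarith
  · -- second inequality
    set R := δ ^ (-(1 / (2 * s))) with hRdef
    have hR0 : 0 < R := Real.rpow_pos_of_pos hδ0 _
    have hR1 : 1 ≤ R :=
      Real.one_le_rpow_of_pos_of_le_one_of_nonpos hδ0 hδ1 (neg_nonpos.2 (by positivity))
    have hRs : R ^ (2 * s) = δ⁻¹ := by
      rw [hRdef, ← Real.rpow_mul hδ0.le,
        show -(1 / (2 * s)) * (2 * s) = -1 by field_simp, Real.rpow_neg_one]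
    have hRR : R * R = δ ^ (-1 / s) := by
      rw [hRdef, ← Real.rpow_add hδ0]
      congr 1
      field_simp
      ring
    set F : ℤ → ℝ≥0∞ := fun n => ENNReal.ofReal ((1 + |(n : ℝ)| / R) ^ (-s)) with hF
    have hKnn : (0 : ℝ) ≤ (2 : ℝ) ^ (2 * s) := hK0.le
    have step1 : (∑' k : {k : ℤ × ℤ // k ≠ 0},
          ENNReal.ofReal (1 / (1 + δ * latticeNorm k ^ (2 * s)))) ≤
        ∑' k : ℤ × ℤ, ENNReal.ofReal ((2 : ℝ) ^ (2 * s) *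
          (1 + |(k.1 : ℝ)| / R) ^ (-s) * (1 + |(k.2 : ℝ)| / R) ^ (-s)) := by
      calc (∑' k : {k : ℤ × ℤ // k ≠ 0},
            ENNReal.ofReal (1 / (1 + δ * latticeNorm k ^ (2 * s)))) ≤
          ∑' k : {k : ℤ × ℤ // k ≠ 0}, ENNReal.ofReal ((2 : ℝ) ^ (2 * s) *
            (1 + |((k : ℤ × ℤ).1 : ℝ)| / R) ^ (-s) * (1 + |((k : ℤ × ℤ).2 : ℝ)| / R) ^ (-s)) :=
          ENNReal.tsum_le_tsum
            (fun k => ENNReal.ofReal_le_ofReal (pointwise_bound hs hδ0 hR0 hRs k))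
        _ ≤ _ := ENNReal.tsum_comp_le_tsum_of_injective Subtype.val_injective _
    have step2 : ∑' k : ℤ × ℤ, ENNReal.ofReal ((2 : ℝ) ^ (2 * s) *
          (1 + |(k.1 : ℝ)| / R) ^ (-s) * (1 + |(k.2 : ℝ)| / R) ^ (-s)) =
        ENNReal.ofReal ((2 : ℝ) ^ (2 * s)) * (∑' n : ℤ, F n) * (∑' n : ℤ, F n) := by
      have hsplit : ∀ k : ℤ × ℤ, ENNReal.ofReal ((2 : ℝ) ^ (2 * s) *
          (1 + |(k.1 : ℝ)| / R) ^ (-s) * (1 + |(k.2 : ℝ)| / R) ^ (-s)) =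
          ENNReal.ofReal ((2 : ℝ) ^ (2 * s)) * F k.1 * F k.2 := by
        intro k
        rw [ENNReal.ofReal_mul (mul_nonneg hKnn (Real.rpow_nonneg (by positivity) _)),
          ENNReal.ofReal_mul hKnn]
      calc ∑' k : ℤ × ℤ, ENNReal.ofReal ((2 : ℝ) ^ (2 * s) *
            (1 + |(k.1 : ℝ)| / R) ^ (-s) * (1 + |(k.2 : ℝ)| / R) ^ (-s)) =
          ∑' k : ℤ × ℤ, ENNReal.ofReal ((2 : ℝ) ^ (2 * s)) * F k.1 * F k.2 :=
            tsum_congr hsplit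
        _ = ∑' a : ℤ, ∑' b : ℤ, ENNReal.ofReal ((2 : ℝ) ^ (2 * s)) * F a * F b :=
            ENNReal.tsum_prod'
        _ = ∑' a : ℤ, (ENNReal.ofReal ((2 : ℝ) ^ (2 * s)) * F a) * (∑' n : ℤ, F n) :=
            tsum_congr (fun a => ENNReal.tsum_mul_left)
        _ = (∑' a : ℤ, ENNReal.ofReal ((2 : ℝ) ^ (2 * s)) * F a) * (∑' n : ℤ, F n) :=
            ENNReal.tsum_mul_right
        _ = ENNReal.ofReal ((2 : ℝ) ^ (2 * s)) * (∑' n : ℤ, F n) * (∑' n : ℤ, F n) := by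
            rw [ENNReal.tsum_mul_left]
    have hSZ : (∑' n : ℤ, F n) ≤ ENNReal.ofReal (4 * zconst s * R) := int_sum_bound hs hR1
    have h4zR : (0 : ℝ) ≤ 4 * zconst s * R :=
      mul_nonneg (mul_nonneg (by norm_num) (by linarith)) hR0.le
    have step3 : (∑' k : {k : ℤ × ℤ // k ≠ 0},
          ENNReal.ofReal (1 / (1 + δ * latticeNorm k ^ (2 * s)))) ≤
        ENNReal.ofReal (16 * (2 : ℝ) ^ (2 * s) * zconst s ^ 2 * δ ^ (-1 / s)) := by
      refine (step1.trans_eq step2).trans ?_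
      calc ENNReal.ofReal ((2 : ℝ) ^ (2 * s)) * (∑' n : ℤ, F n) * (∑' n : ℤ, F n) ≤
          ENNReal.ofReal ((2 : ℝ) ^ (2 * s)) * ENNReal.ofReal (4 * zconst s * R) *
            ENNReal.ofReal (4 * zconst s * R) := by gcongr
        _ = ENNReal.ofReal ((2 : ℝ) ^ (2 * s) * (4 * zconst s * R) * (4 * zconst s * R)) := by
            rw [ENNReal.ofReal_mul (mul_nonneg hKnn h4zR), ENNReal.ofReal_mul hKnn]
        _ = ENNReal.ofReal (16 * (2 : ℝ) ^ (2 * s) * zconst s ^ 2 * δ ^ (-1 / s)) := by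
            rw [show (2 : ℝ) ^ (2 * s) * (4 * zconst s * R) * (4 * zconst s * R) =
              16 * (2 : ℝ) ^ (2 * s) * zconst s ^ 2 * (R * R) by ring, hRR]
    calc ENNReal.ofReal η * (∑' k : {k : ℤ × ℤ // k ≠ 0},
          ENNReal.ofReal (1 / (1 + δ * latticeNorm k ^ (2 * s)))) ≤
        ENNReal.ofReal η * ENNReal.ofReal (16 * (2 : ℝ) ^ (2 * s) * zconst s ^ 2 * δ ^ (-1 / s)) :=
          mul_le_mul_right step3 _
      _ = ENNReal.ofReal (η * (16 * (2 : ℝ) ^ (2 * s) * zconst s ^ 2 * δ ^ (-1 / s))) :=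
          (ENNReal.ofReal_mul hη0.le).symm
      _ = ENNReal.ofReal (16 * (2 : ℝ) ^ (2 * s) * zconst s ^ 2 * η * δ ^ (-1 / s)) := by
          congr 1
          ring
end
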